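/- If the graph G_s is ε-trivial at some time s ≥ 0 (i.e., |x_i(s) − x_j(s)| ≤ ε for all i, j ∈ [n]), then G_t = G (i.e., E_t = E) for all t ≥ s. -/

import Mathlib

open Finset
open scoped Classical

/-- The threshold graph `G_t`: social neighbors whose garbage differs by at most `ε`. -/
def Gt {n : ℕ} (G : SimpleGraph (Fin n)) (x : ℕ → Fin n → ℝ) (ε : ℝ) (t : ℕ) :
    SimpleGraph (Fin n) where
  Adj i j := G.Adj i j ∧ |x t i - x t j| ≤ ε
  symm := by
    constructor
    intro i j h
    exact ⟨h.1.symm, by rw [abs_sub_comm]; exact h.2⟩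
  loopless := by
    constructor
    intro i h
    exact G.irrefl h.1

/-- `|E_t|`: the number of edges of `G_t`. -/
noncomputable def Ecard {n : ℕ} (G : SimpleGraph (Fin n)) (x : ℕ → Fin n → ℝ) (ε : ℝ)
    (t : ℕ) : ℕ :=
  (Gt G x ε t).edgeSet.ncard

/-- `N_i(t)`: the neighbors of `i` in `G_t`, as a finset. -/
noncomputable def Nb {n : ℕ} (G : SimpleGraph (Fin n)) (x : ℕ → Fin n → ℝ) (ε : ℝ)
    (t : ℕ) (i : Fin n) : Finset (Fin n) :=
  Finset.univ.filter fun j => (Gt G x ε t).Adj i j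

/-- The update rule of the garbage disposal game. -/
def Update {n : ℕ} (G : SimpleGraph (Fin n)) (x : ℕ → Fin n → ℝ) (ε : ℝ) : Prop :=
  ∀ t i,
    x (t + 1) i =
      (if (Gt G x ε t).edgeSet.Nonempty then (1 : ℝ) else 0) / (Ecard G x ε t : ℝ) *
          ∑ j ∈ Nb G x ε t i, x t j +
        (1 - ((Nb G x ε t i).card : ℝ) / (Ecard G x ε t : ℝ) *
            (if (Gt G x ε t).edgeSet.Nonempty then (1 : ℝ) else 0)) * x t i

/-- The Lyapunov functional `Z_t`. -/
noncomputable def Z {n : ℕ} (G : SimpleGraph (Fin n)) (x : ℕ → Fin n → ℝ) (ε : ℝ)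
    (t : ℕ) : ℝ :=
  ∑ i, ∑ j,
    max (min (ε ^ 2) ((x t i - x t j) ^ 2)) (ε ^ 2 * if ¬ G.Adj i j then 1 else 0)

lemma card_Nb_le_Ecard {n : ℕ} (G : SimpleGraph (Fin n)) (x : ℕ → Fin n → ℝ) (ε : ℝ)
    (t : ℕ) (i : Fin n) : (Nb G x ε t i).card ≤ Ecard G x ε t := by
  classical
  have hinj : Set.InjOn (fun j => s(i, j)) (Nb G x ε t i) := by
    intro a _ b _ hab
    exact (Sym2.congr_right.mp hab)
  have hcard : ((Nb G x ε t i).image (fun j => s(i, j))).card = (Nb G x ε t i).card :=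
    Finset.card_image_of_injOn hinj
  have hsub : (((Nb G x ε t i).image (fun j => s(i, j))) : Set (Sym2 (Fin n))) ⊆
      (Gt G x ε t).edgeSet := by
    intro e he
    simp only [Finset.coe_image, Set.mem_image, Finset.mem_coe, Nb,
      Finset.mem_filter, Finset.mem_univ, true_and] at he
    obtain ⟨j, hj, rfl⟩ := he
    exact hj
  have := Set.ncard_le_ncard hsub (Set.toFinite _)
  rw [Set.ncard_coe_finset, hcard] at this
  exact this

lemma step_bounds {n : ℕ} (G : SimpleGraph (Fin n)) (x : ℕ → Fin n → ℝ) (ε : ℝ)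
    (hupd : Update G x ε) (t : ℕ) (lo hi : ℝ)
    (h : ∀ j, lo ≤ x t j ∧ x t j ≤ hi) (i : Fin n) :
    lo ≤ x (t + 1) i ∧ x (t + 1) i ≤ hi := by
  classical
  rw [hupd t i]
  by_cases hE : (Gt G x ε t).edgeSet.Nonempty
  · simp only [if_pos hE]
    set E : ℝ := (Ecard G x ε t : ℝ) with hEdef
    set N : ℝ := ((Nb G x ε t i).card : ℝ) with hNdef
    set S : ℝ := ∑ j ∈ Nb G x ε t i, x t j with hSdef
    have hEpos : 0 < E := by
      have : 0 < Ecard G x ε t := by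
        rw [Ecard, Set.ncard_pos (Set.toFinite _)]
        exact hE
      rw [hEdef]; exact_mod_cast this
    have hNE : N ≤ E := by
      rw [hNdef, hEdef]; exact_mod_cast card_Nb_le_Ecard G x ε t i
    have hN0 : 0 ≤ N := by positivity
    have hSlo : N * lo ≤ S := by
      have := Finset.card_nsmul_le_sum (Nb G x ε t i) (x t) lo (fun j _ => (h j).1)
      simpa [nsmul_eq_mul, mul_comm] using this
    have hShi : S ≤ N * hi := by
      have := Finset.sum_le_card_nsmul (Nb G x ε t i) (x t) hi (fun j _ => (h j).2)
      simpa [nsmul_eq_mul, mul_comm] using this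
    have hkey : (1 : ℝ) / E * S + (1 - N / E * 1) * x t i =
        (S + (E - N) * x t i) / E := by
      field_simp
    rw [hkey]
    constructor
    · rw [le_div_iff₀ hEpos]
      nlinarith [(h i).1, mul_le_mul_of_nonneg_left (h i).1 (sub_nonneg.mpr hNE)]
    · rw [div_le_iff₀ hEpos]
      nlinarith [(h i).2, mul_le_mul_of_nonneg_left (h i).2 (sub_nonneg.mpr hNE)]
  · simp only [if_neg hE, zero_div, zero_mul, mul_zero, sub_zero, one_mul, zero_add]
    exact h i

lemma triv_propagates {n : ℕ} (G : SimpleGraph (Fin n)) (x : ℕ → Fin n → ℝ) (ε : ℝ)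
    (hupd : Update G x ε) (t : ℕ) (h : ∀ i j, |x t i - x t j| ≤ ε) :
    ∀ i j, |x (t + 1) i - x (t + 1) j| ≤ ε := by
  classical
  intro i j
  have hne : (Finset.univ : Finset (Fin n)).Nonempty := ⟨i, Finset.mem_univ i⟩
  set lo : ℝ := Finset.univ.inf' hne (x t) with hlo
  set hi : ℝ := Finset.univ.sup' hne (x t) with hhi
  have hb : ∀ k, lo ≤ x t k ∧ x t k ≤ hi := fun k =>
    ⟨Finset.inf'_le _ (Finset.mem_univ k), Finset.le_sup' _ (Finset.mem_univ k)⟩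
  have hwidth : hi - lo ≤ ε := by
    obtain ⟨a, _, ha⟩ := Finset.exists_mem_eq_sup' hne (x t)
    obtain ⟨b, _, hb'⟩ := Finset.exists_mem_eq_inf' hne (x t)
    rw [hhi, hlo, ha, hb']
    calc x t a - x t b ≤ |x t a - x t b| := le_abs_self _
      _ ≤ ε := h a b
  have hi' := step_bounds G x ε hupd t lo hi hb i
  have hj' := step_bounds G x ε hupd t lo hi hb j
  rw [abs_sub_le_iff]
  constructor <;> linarith [hi'.1, hi'.2, hj'.1, hj'.2]

/-- If `G_s` is ε-trivial at some time `s`, then `G_t = G` for all `t ≥ s`. -/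
theorem eps_trivial_full_graph {n : ℕ} (G : SimpleGraph (Fin n)) (x : ℕ → Fin n → ℝ)
    (ε : ℝ) (hε : 0 < ε) (hx0 : ∀ i, 0 ≤ x 0 i) (hupd : Update G x ε)
    (s : ℕ) (htriv : ∀ i j, |x s i - x s j| ≤ ε) :
    ∀ t : ℕ, s ≤ t → Gt G x ε t = G := by
  have key : ∀ t : ℕ, s ≤ t → ∀ i j, |x t i - x t j| ≤ ε := by
    intro t ht
    induction t, ht using Nat.le_induction with
    | base => exact htriv
    | succ m hm ih => exact triv_propagates G x ε hupd m ih
  intro t ht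
  ext i j
  constructor
  · exact fun h => h.1
  · exact fun h => ⟨h, key t ht i j⟩
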